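/- Let A : [a,b] → M_{n×n}(ℝ) be a continuous matrix function and let σ₁ = {i₁ < ⋯ < iₘ}, σ₂ = {j₁ < ⋯ < jₘ} be disjoint subsets of {1,…,n} of equal cardinality m. Let U = span{eᵢ : i ∈ σ₁ ∪ σ₂} and suppose there exists c > 0 with m_{A(t)|U} ≥ c for all t ∈ [a,b]. For each t ∈ [a,b] let U(t) be the span of the orthonormal vectors u_k(t) = (1 − (t−a)/(b−a))^{1/2} e_{i_k} + ((t−a)/(b−a))^{1/2} e_{j_k}, k = 1,…,m. Then {U(t)}_{t ∈ [a,b]} is a continuous choice of subspaces of ℝⁿ with U(a) = span{eᵢ : i ∈ σ₁}, U(b) = span{eⱼ : j ∈ σ₂}, and m_{A(t)|U(t)} ≥ c for all t ∈ [a,b]. -/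

import Mathlib

open scoped RealInnerProductSpace BigOperators

/-- The Euclidean operator norm of a real matrix: `sup {‖Ax‖ : ‖x‖ = 1}`. -/
noncomputable def opNorm {m n : ℕ} (A : Matrix (Fin m) (Fin n) ℝ) : ℝ :=
  sSup {c : ℝ | ∃ x : EuclideanSpace ℝ (Fin n), ‖x‖ = 1 ∧ c = ‖Matrix.toEuclideanLin A x‖}

/-- The matrix of the orthogonal projection of `ℝⁿ` onto the subspace `U`. -/
noncomputable def projMatrix {n : ℕ} (U : Submodule ℝ (EuclideanSpace ℝ (Fin n))) :
    Matrix (Fin n) (Fin n) ℝ :=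
  Matrix.toEuclideanLin.symm (U.subtype ∘ₗ (Submodule.orthogonalProjection U).toLinearMap)

/-- The minimal stretch of a matrix `A` on a subspace `U`: `inf {‖Ax‖ : x ∈ U, ‖x‖ = 1}`. -/
noncomputable def minStretch {m n : ℕ} (A : Matrix (Fin m) (Fin n) ℝ)
    (U : Submodule ℝ (EuclideanSpace ℝ (Fin n))) : ℝ :=
  sInf {c : ℝ | ∃ x ∈ U, ‖x‖ = 1 ∧ c = ‖Matrix.toEuclideanLin A x‖}

lemma projMatrix_orthonormal {n m : ℕ} (v : Fin m → EuclideanSpace ℝ (Fin n))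
    (hv : Orthonormal ℝ v) (p q : Fin n) :
    projMatrix (Submodule.span ℝ (Set.range v)) p q = ∑ k, v k p * v k q := by
  classical
  set U := Submodule.span ℝ (Set.range v) with hUdef
  have hUeq : Submodule.span ℝ ((Finset.univ.image v : Finset _) : Set _) = U := by
    rw [Finset.coe_image, Finset.coe_univ, Set.image_univ]
  let b : OrthonormalBasis (Finset.univ : Finset (Fin m)) ℝ U :=
    (OrthonormalBasis.span hv Finset.univ).map (LinearIsometryEquiv.ofEq _ _ hUeq)
  have hb : ∀ k : (Finset.univ : Finset (Fin m)), (b k : EuclideanSpace ℝ (Fin n)) = v k := by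
    intro k
    simp [b]
  have hproj : ∀ x, (U.subtype ∘ₗ (Submodule.orthogonalProjection U).toLinearMap) x
      = ∑ k : Fin m, ⟪v k, x⟫ • v k := by
    intro x
    rw [LinearMap.comp_apply]
    simp only [Submodule.subtype_apply, ContinuousLinearMap.coe_coe]
    rw [b.orthogonalProjectionOnto_apply_eq_sum x]
    push_cast
    simp only [hb]
    exact Finset.sum_coe_sort Finset.univ (fun k : Fin m => ⟪v k, x⟫ • v k)
  have hM : Matrix.toEuclideanLin (projMatrix U)
      = (U.subtype ∘ₗ (Submodule.orthogonalProjection U).toLinearMap) := by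
    rw [projMatrix, LinearEquiv.apply_symm_apply]
  have h1 : projMatrix U p q
      = (Matrix.toEuclideanLin (projMatrix U)) (EuclideanSpace.single q 1) p := by
    simp [Matrix.toEuclideanLin_apply, Matrix.mulVec_single]
  rw [h1, hM, hproj]
  rw [WithLp.ofLp_sum, Finset.sum_apply p Finset.univ]
  refine Finset.sum_congr rfl fun k _ => ?_
  simp [smul_eq_mul, mul_comm, EuclideanSpace.inner_single_right]

/-- **Column switch lemma.** -/
theorem column_switch {n m : ℕ} (a b : ℝ) (hab : a < b)
    (A : ℝ → Matrix (Fin n) (Fin n) ℝ) (hA : ContinuousOn A (Set.Icc a b))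
    (σi σj : Fin m → Fin n) (hi : StrictMono σi) (hj : StrictMono σj)
    (hdisj : Disjoint (Set.range σi) (Set.range σj))
    (c : ℝ) (hc : 0 < c)
    (hstretch : ∀ t ∈ Set.Icc a b,
      c ≤ minStretch (A t)
        (Submodule.span ℝ
          ((fun k => EuclideanSpace.single k (1:ℝ)) '' (Set.range σi ∪ Set.range σj))))
    (u : ℝ → Fin m → EuclideanSpace ℝ (Fin n))
    (hu : ∀ (t : ℝ) (k : Fin m), u t k =
      Real.sqrt (1 - (t - a) / (b - a)) • EuclideanSpace.single (σi k) (1:ℝ) +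
      Real.sqrt ((t - a) / (b - a)) • EuclideanSpace.single (σj k) (1:ℝ))
    (U : ℝ → Submodule ℝ (EuclideanSpace ℝ (Fin n)))
    (hU : ∀ t : ℝ, U t = Submodule.span ℝ (Set.range (u t))) :
    (∀ t ∈ Set.Icc a b, Orthonormal ℝ (u t)) ∧
    ContinuousOn (fun t => projMatrix (U t)) (Set.Icc a b) ∧
    U a = Submodule.span ℝ (Set.range fun k => EuclideanSpace.single (σi k) (1:ℝ)) ∧
    U b = Submodule.span ℝ (Set.range fun k => EuclideanSpace.single (σj k) (1:ℝ)) ∧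
    ∀ t ∈ Set.Icc a b, c ≤ minStretch (A t) (U t) := by
  have hba : (0:ℝ) < b - a := sub_pos.mpr hab
  have hij : ∀ k l, σi k ≠ σj l := by
    intro k l h
    exact Set.disjoint_left.mp hdisj ⟨k, rfl⟩ ⟨l, h.symm⟩
  -- Part 1: orthonormality
  have hon : ∀ t ∈ Set.Icc a b, Orthonormal ℝ (u t) := by
    intro t ht
    have hs0 : 0 ≤ (t - a) / (b - a) := div_nonneg (by linarith [ht.1]) hba.le
    have hs1 : (t - a) / (b - a) ≤ 1 := by
      rw [div_le_one hba]; linarith [ht.2]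
    rw [orthonormal_iff_ite]
    intro k l
    rw [hu, hu]
    simp only [inner_add_left, inner_add_right, real_inner_smul_left, real_inner_smul_right,
      EuclideanSpace.inner_single_left, EuclideanSpace.single_apply, RCLike.star_def,
      conj_trivial, mul_ite, mul_one, mul_zero]
    by_cases hkl : k = l
    · subst hkl
      simp [hi.injective.eq_iff, hj.injective.eq_iff, hij, Ne.symm (hij k k),
        Real.mul_self_sqrt (by linarith : (0:ℝ) ≤ 1 - (t-a)/(b-a)),
        Real.mul_self_sqrt hs0]
    · simp [hkl, hi.injective.eq_iff, hj.injective.eq_iff, hij, fun k l => (hij l k).symm]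
  refine ⟨hon, ?_, ?_, ?_, ?_⟩
  -- Part 2: continuity
  · have hu' : ∀ (t : ℝ) (k : Fin m) (p : Fin n), u t k p =
        Real.sqrt (1 - (t - a) / (b - a)) * (EuclideanSpace.single (σi k) (1:ℝ) p) +
        Real.sqrt ((t - a) / (b - a)) * (EuclideanSpace.single (σj k) (1:ℝ) p) := by
      intro t k p
      rw [hu]
      rfl
    have hcont : ∀ (k : Fin m) (p : Fin n), Continuous fun t => u t k p := by
      intro k p
      simp only [hu']
      have h1 : Continuous fun t : ℝ => (t - a) / (b - a) :=
        (continuous_id.sub continuous_const).div_const _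
      exact (((continuous_const.sub h1).sqrt).mul continuous_const).add
        ((h1.sqrt).mul continuous_const)
    have key : ∀ t ∈ Set.Icc a b,
        projMatrix (U t) = Matrix.of fun p q => ∑ k, u t k p * u t k q := by
      intro t ht
      ext p q
      rw [hU t, projMatrix_orthonormal (u t) (hon t ht) p q]
      rfl
    refine ContinuousOn.congr ?_ key
    refine Continuous.continuousOn ?_
    refine continuous_matrix fun p q => ?_
    show Continuous fun t => ∑ k : Fin m, u t k p * u t k q
    exact continuous_finset_sum _ fun k _ => (hcont k p).mul (hcont k q)
  -- Part 3: U a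
  · have hua : u a = fun k => EuclideanSpace.single (σi k) (1:ℝ) := by
      funext k
      rw [hu]
      simp
    rw [hU a, hua]
  -- Part 4: U b
  · have hub : u b = fun k => EuclideanSpace.single (σj k) (1:ℝ) := by
      funext k
      rw [hu]
      simp [div_self hba.ne']
    rw [hU b, hub]
  -- Part 5: minStretch lower bound
  · intro t ht
    rcases Nat.eq_zero_or_pos m with hm | hm
    · -- m = 0: hypothesis is contradictory
      exfalso
      subst hm
      have h := hstretch a ⟨le_refl a, hab.le⟩
      have hr : (Set.range σi ∪ Set.range σj : Set (Fin n)) = ∅ := by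
        simp [Set.range_eq_empty]
      rw [hr] at h
      simp only [Set.image_empty, Submodule.span_empty] at h
      have : {c : ℝ | ∃ x ∈ (⊥ : Submodule ℝ (EuclideanSpace ℝ (Fin n))), ‖x‖ = 1 ∧
          c = ‖Matrix.toEuclideanLin (A a) x‖} = ∅ := by
        ext r
        simp only [Set.mem_setOf_eq, Submodule.mem_bot, Set.mem_empty_iff_false, iff_false]
        rintro ⟨x, rfl, hx, -⟩
        simp at hx
      rw [minStretch, this, Real.sInf_empty] at h
      linarith
    · -- m > 0
      have hmem : ∀ x ∈ U t, x ∈ Submodule.span ℝ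
          ((fun k => EuclideanSpace.single k (1:ℝ)) '' (Set.range σi ∪ Set.range σj)) := by
        intro x hx
        rw [hU t] at hx
        refine Submodule.span_le.mpr ?_ hx
        rintro y ⟨k, rfl⟩
        rw [hu]
        exact Submodule.add_mem _
          (Submodule.smul_mem _ _ (Submodule.subset_span ⟨σi k, Or.inl ⟨k, rfl⟩, rfl⟩))
          (Submodule.smul_mem _ _ (Submodule.subset_span ⟨σj k, Or.inr ⟨k, rfl⟩, rfl⟩))
      rw [minStretch]
      refine le_csInf ?_ ?_
      · refine ⟨‖Matrix.toEuclideanLin (A t) (u t ⟨0, hm⟩)‖, u t ⟨0, hm⟩, ?_, ?_, rfl⟩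
        · rw [hU t]
          exact Submodule.subset_span ⟨⟨0, hm⟩, rfl⟩
        · exact (hon t ht).1 ⟨0, hm⟩
      · rintro r ⟨x, hx, hx1, rfl⟩
        refine le_trans (hstretch t ht) (csInf_le ?_ ⟨x, hmem x hx, hx1, rfl⟩)
        refine ⟨0, ?_⟩
        rintro r ⟨y, -, -, rfl⟩
        exact norm_nonneg _
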